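/- arXiv:2601.23170 — 3 statements merged into one kernel-verified Lean document; each statement's English description precedes it below -/
import Mathlib

section
/- Define T(n,s,i) as the number of s-element subsets γ = {γ₁ < ... < γ_s} of {1,...,n} with exactly i indices j satisfying γⱼ ≠ 2j. Then for 0 < i ≤ s ≤ ⌊(n-1)/2⌋, T(n,s,i) = T(n-1,s,i) + T(n-1,s-1,i-1). -/
/-- Number of marks not at home: indices `j` (0-indexed) with `γⱼ₊₁ ≠ 2(j+1)`. -/
def natCount (γ : Finset ℕ) : ℕ :=
  ((Finset.range γ.card).filter fun j => (γ.sort (· ≤ ·)).getD j 0 ≠ 2 * (j + 1)).card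

/-- `T n s i` counts the `s`-element subsets of `{1,…,n}` with exactly `i` marks not at home. -/
def T (n s i : ℕ) : ℕ :=
  (((Finset.Icc 1 n).powersetCard s).filter fun γ => natCount γ = i).card

lemma sort_insert_max (γ : Finset ℕ) (a : ℕ) (ha : ∀ x ∈ γ, x < a) :
    (insert a γ).sort (· ≤ ·) = γ.sort (· ≤ ·) ++ [a] := by
  have hnot : a ∉ γ := fun h => lt_irrefl a (ha a h)
  have hperm : ((insert a γ).sort (· ≤ ·)).Perm (γ.sort (· ≤ ·) ++ [a]) :=
    ((Finset.sort_perm_toList _ _).trans (Finset.toList_insert hnot)).trans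
      (((Finset.sort_perm_toList _ _).symm.cons a).trans
        (List.perm_append_singleton _ _).symm)
  refine List.Perm.eq_of_pairwise' (Finset.pairwise_sort _ _) ?_ hperm
  refine List.pairwise_append.mpr ⟨Finset.pairwise_sort _ _, List.pairwise_singleton _ a, ?_⟩
  intro x hx y hy
  simp only [List.mem_singleton] at hy
  subst hy
  exact (ha x ((Finset.mem_sort _).mp hx)).le

lemma natCount_insert_max (γ : Finset ℕ) (a : ℕ) (ha : ∀ x ∈ γ, x < a)
    (hne : a ≠ 2 * (γ.card + 1)) : natCount (insert a γ) = natCount γ + 1 := by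
  have hnot : a ∉ γ := fun h => lt_irrefl a (ha a h)
  have hlen : (γ.sort (· ≤ ·)).length = γ.card := Finset.length_sort _
  unfold natCount
  rw [Finset.card_insert_of_notMem hnot, sort_insert_max γ a ha, Finset.range_add_one,
    Finset.filter_insert]
  have hget : (γ.sort (· ≤ ·) ++ [a]).getD γ.card 0 = a := by
    rw [List.getD_eq_getElem?_getD]
    rw [List.getElem?_append_right (by omega)]
    simp [hlen]
  rw [if_pos (by rw [hget]; exact hne)]
  rw [Finset.card_insert_of_notMem (by simp)]
  congr 1
  refine congrArg Finset.card (Finset.filter_congr ?_)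
  intro j hj
  rw [Finset.mem_range] at hj
  rw [List.getD_append _ _ _ _ (by omega)]

theorem stmt3 (n s i : ℕ) (h0 : 0 < i) (h1 : i ≤ s) (h2 : s ≤ (n - 1) / 2) :
    T n s i = T (n - 1) s i + T (n - 1) (s - 1) (i - 1) := by
  have h2s : 2 * s ≤ n - 1 := by
    have := (Nat.le_div_iff_mul_le (by norm_num)).mp h2
    omega
  have hn : 3 ≤ n := by omega
  set S := ((Finset.Icc 1 n).powersetCard s).filter fun γ => natCount γ = i with hS
  have hsplit := Finset.card_filter_add_card_filter_not
    (s := S) (p := fun γ => n ∈ γ)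
  have hA : S.filter (fun γ => n ∉ γ) =
      ((Finset.Icc 1 (n - 1)).powersetCard s).filter fun γ => natCount γ = i := by
    ext γ
    simp only [hS, Finset.mem_filter, Finset.mem_powersetCard, and_assoc]
    constructor
    · rintro ⟨hsub, hc, hcnt, hni⟩
      refine ⟨fun x hx => ?_, hc, hcnt⟩
      have := hsub hx
      rw [Finset.mem_Icc] at this ⊢
      have : x ≠ n := fun h => hni (h ▸ hx)
      omega
    · rintro ⟨hsub, hc, hcnt⟩
      have hx : ∀ x ∈ γ, 1 ≤ x ∧ x ≤ n - 1 := by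
        intro x hx; exact Finset.mem_Icc.mp (hsub hx)
      refine ⟨fun x hxm => ?_, hc, hcnt, fun hni => ?_⟩
      · rw [Finset.mem_Icc]; have := hx x hxm; omega
      · have := hx n hni; omega
  have hB : (S.filter (fun γ => n ∈ γ)).card =
      (((Finset.Icc 1 (n - 1)).powersetCard (s - 1)).filter fun γ => natCount γ = i - 1).card := by
    apply Finset.card_bij (fun γ _ => γ.erase n)
    · intro γ hγ
      simp only [hS, Finset.mem_filter, Finset.mem_powersetCard] at hγ
      obtain ⟨⟨⟨hsub, hc⟩, hcnt⟩, hmem⟩ := hγ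
      have hlt : ∀ x ∈ γ.erase n, x < n := by
        intro x hx
        rw [Finset.mem_erase] at hx
        have := Finset.mem_Icc.mp (hsub hx.2)
        omega
      have hkey : natCount γ = natCount (γ.erase n) + 1 := by
        conv_lhs => rw [← Finset.insert_erase hmem]
        rw [natCount_insert_max _ _ hlt]
        rw [Finset.card_erase_of_mem hmem, hc]
        omega
      simp only [Finset.mem_filter, Finset.mem_powersetCard]
      refine ⟨⟨fun x hx => ?_, ?_⟩, ?_⟩
      · rw [Finset.mem_Icc]
        rw [Finset.mem_erase] at hx
        have := Finset.mem_Icc.mp (hsub hx.2)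
        have := hlt x (Finset.mem_erase.mpr hx)
        omega
      · rw [Finset.card_erase_of_mem hmem, hc]
      · omega
    · intro γ₁ h₁ γ₂ h₂ heq
      simp only [hS, Finset.mem_filter] at h₁ h₂
      rw [← Finset.insert_erase h₁.2, ← Finset.insert_erase h₂.2, heq]
    · intro γ' hγ'
      simp only [Finset.mem_filter, Finset.mem_powersetCard] at hγ'
      obtain ⟨⟨hsub, hc⟩, hcnt⟩ := hγ'
      have hlt : ∀ x ∈ γ', x < n := by
        intro x hx
        have := Finset.mem_Icc.mp (hsub hx)
        omega
      have hnot : n ∉ γ' := fun h => lt_irrefl n (hlt n h)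
      refine ⟨insert n γ', ?_, ?_⟩
      · simp only [hS, Finset.mem_filter, Finset.mem_powersetCard]
        refine ⟨⟨⟨fun x hx => ?_, ?_⟩, ?_⟩, Finset.mem_insert_self n γ'⟩
        · rw [Finset.mem_insert] at hx
          rw [Finset.mem_Icc]
          rcases hx with rfl | hx
          · omega
          · have := Finset.mem_Icc.mp (hsub hx); omega
        · rw [Finset.card_insert_of_notMem hnot, hc]; omega
        · rw [natCount_insert_max _ _ hlt (by rw [hc]; omega), hcnt]; omega
      · rw [Finset.erase_insert hnot]
  have : T n s i = S.card := rfl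
  rw [this, ← hsplit]
  have hTA : T (n - 1) s i = (S.filter (fun γ => n ∉ γ)).card := by
    rw [hA]; rfl
  rw [hTA, hB]
  rw [Nat.add_comm]
  rfl
end

section
/- Define T(n,s,i) as the number of s-element subsets γ = {γ₁ < ... < γ_s} of {1,...,n} with exactly i indices j satisfying γⱼ ≠ 2j. Then for i ≥ 1, T(2i, i, i) = T(2i-1, i-1, i-1). -/
namespace Stmt4Aux

open Finset

/-- number of elements of γ that are ≤ m -/
def cnt (γ : Finset ℕ) (m : ℕ) : ℕ := (γ.filter (· ≤ m)).card

/-- the "level" of the lattice path at time m -/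
def Lv (γ : Finset ℕ) (m : ℕ) : ℤ := 2 * (cnt γ m : ℤ) - m

lemma length_filter_le_get : ∀ (l : List ℕ), l.Pairwise (· < ·) → ∀ (j : ℕ) (h : j < l.length),
    (l.filter (fun y => decide (y ≤ l[j]))).length = j + 1 := by
  intro l
  induction l with
  | nil => intro _ j h; simp at h
  | cons a tl ih =>
    intro hl j h
    have ha : ∀ b ∈ tl, a < b := fun b hb => (List.pairwise_cons.1 hl).1 b hb
    have htl : tl.Pairwise (· < ·) := (List.pairwise_cons.1 hl).2
    cases j with
    | zero =>
      have : tl.filter (fun y => decide (y ≤ a)) = [] := by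
        apply List.filter_eq_nil_iff.2
        intro b hb
        simpa using not_le.2 (ha b hb)
      simp [List.filter_cons, this]
    | succ j =>
      have hj : j < tl.length := by simpa using h
      have hle : a ≤ tl[j] := le_of_lt (ha _ (List.getElem_mem hj))
      have hg : (a :: tl)[j+1] = tl[j] := by simp
      rw [hg]
      rw [List.filter_cons]
      simp only [decide_eq_true_eq, hle, if_pos]
      rw [List.length_cons, ih htl j hj]

lemma cnt_eq_length_filter (γ : Finset ℕ) (x : ℕ) :
    cnt γ x = ((γ.sort (· ≤ ·)).filter (fun y => decide (y ≤ x))).length := by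
  unfold cnt
  have h := Finset.sort_eq γ (· ≤ ·)
  rw [Finset.card_def, Finset.filter_val]
  rw [← h, Multiset.filter_coe, Multiset.coe_card]

lemma natCount_eq_card_iff (γ : Finset ℕ) :
    natCount γ = γ.card ↔ ∀ x ∈ γ, x ≠ 2 * cnt γ x := by
  set l := γ.sort (· ≤ ·) with hldef
  have hlen : l.length = γ.card := Finset.length_sort _
  have hsort : l.Pairwise (· < ·) := (Finset.sortedLT_sort γ).pairwise
  have h1 : natCount γ = γ.card ↔ ∀ j, (hj : j < l.length) → l[j] ≠ 2 * (j + 1) := by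
    unfold natCount
    constructor
    · intro hc j hj
      have hsub : ((Finset.range γ.card).filter fun j => (γ.sort (· ≤ ·)).getD j 0 ≠ 2 * (j + 1))
          ⊆ Finset.range γ.card := Finset.filter_subset _ _
      have : ((Finset.range γ.card).filter fun j => (γ.sort (· ≤ ·)).getD j 0 ≠ 2 * (j + 1))
          = Finset.range γ.card := by
        apply Finset.eq_of_subset_of_card_le hsub
        rw [hc, Finset.card_range]
      have hjmem : j ∈ Finset.range γ.card := by
        rw [Finset.mem_range, ← hlen]; exact hj
      rw [← this] at hjmem
      have := (Finset.mem_filter.1 hjmem).2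
      rwa [← hldef, List.getD_eq_getElem l 0 hj] at this
    · intro hall
      have : ((Finset.range γ.card).filter fun j => (γ.sort (· ≤ ·)).getD j 0 ≠ 2 * (j + 1))
          = Finset.range γ.card := by
        apply Finset.filter_true_of_mem
        intro j hj
        have hj' : j < l.length := by rw [hlen]; exact Finset.mem_range.1 hj
        rw [← hldef, List.getD_eq_getElem l 0 hj']
        exact hall j hj'
      rw [this, Finset.card_range]
  rw [h1]
  constructor
  · intro hall x hx
    have hxl : x ∈ l := (Finset.mem_sort _).2 hx
    obtain ⟨⟨j, hj⟩, hget⟩ := List.mem_iff_get.1 hxl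
    have hrank : cnt γ x = j + 1 := by
      rw [cnt_eq_length_filter]
      rw [← hldef]
      have : x = l[j] := by rw [← hget]; rfl
      rw [this]
      exact length_filter_le_get l hsort j hj
    intro hbad
    apply hall j hj
    have : l[j] = x := hget
    rw [this, hbad, hrank]
  · intro hall j hj hbad
    have hxl : l[j] ∈ l := List.getElem_mem hj
    have hx : l[j] ∈ γ := (Finset.mem_sort _).1 hxl
    have hrank : cnt γ l[j] = j + 1 := by
      rw [cnt_eq_length_filter, ← hldef]
      exact length_filter_le_get l hsort j hj
    exact hall _ hx (by rw [hrank, hbad])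

/-- times m ∈ [0,n] at which the level is 0 -/
def Zs (n : ℕ) (γ : Finset ℕ) : Finset ℕ :=
  (Finset.range (n+1)).filter fun m => Lv γ m = 0

/-- last time the level is 0 -/
def tm (n : ℕ) (γ : Finset ℕ) : ℕ := WithBot.unbotD 0 (Zs n γ).max

section Path

variable {n : ℕ} {γ : Finset ℕ} (hγ : γ ⊆ Finset.Icc 1 n)

include hγ

lemma cnt_zero : cnt γ 0 = 0 := by
  unfold cnt
  rw [Finset.card_eq_zero]
  apply Finset.filter_false_of_mem
  intro x hx
  have := (Finset.mem_Icc.1 (hγ hx)).1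
  omega

lemma zero_mem_Zs : 0 ∈ Zs n γ := by
  unfold Zs
  rw [Finset.mem_filter, Finset.mem_range]
  refine ⟨by omega, ?_⟩
  unfold Lv
  rw [cnt_zero hγ]
  simp

lemma tm_mem : tm n γ ∈ Zs n γ := by
  have hne : (Zs n γ).Nonempty := ⟨0, zero_mem_Zs hγ⟩
  obtain ⟨a, ha⟩ := Finset.max_of_nonempty hne
  have : tm n γ = a := by unfold tm; rw [ha]; rfl
  rw [this]
  exact Finset.mem_of_max ha

lemma le_tm {b : ℕ} (hb : b ∈ Zs n γ) : b ≤ tm n γ := by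
  have hne : (Zs n γ).Nonempty := ⟨0, zero_mem_Zs hγ⟩
  obtain ⟨a, ha⟩ := Finset.max_of_nonempty hne
  have : tm n γ = a := by unfold tm; rw [ha]; rfl
  rw [this]
  exact Finset.le_max_of_eq hb ha

lemma tm_le : tm n γ ≤ n := by
  have := tm_mem hγ
  unfold Zs at this
  have := (Finset.mem_filter.1 this).1
  rw [Finset.mem_range] at this
  omega

lemma Lv_tm : Lv γ (tm n γ) = 0 := by
  have := tm_mem hγ
  exact (Finset.mem_filter.1 this).2

lemma Lv_ne_of_gt {m : ℕ} (h1 : tm n γ < m) (h2 : m ≤ n) : Lv γ m ≠ 0 := by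
  intro hz
  have : m ∈ Zs n γ := by
    unfold Zs
    rw [Finset.mem_filter, Finset.mem_range]
    exact ⟨by omega, hz⟩
  have := le_tm hγ this
  omega

end Path

/-- the involution: flip membership on the interval after the last zero of the level path -/
def psi (n : ℕ) (γ : Finset ℕ) : Finset ℕ :=
  γ.filter (· ≤ tm n γ) ∪ (Finset.Ioc (tm n γ) n \ γ)

section Psi

variable {n : ℕ} {γ : Finset ℕ} (hγ : γ ⊆ Finset.Icc 1 n)

include hγ

lemma psi_subset : psi n γ ⊆ Finset.Icc 1 n := by
  unfold psi
  intro x hx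
  rcases Finset.mem_union.1 hx with h | h
  · exact hγ (Finset.mem_filter.1 h).1
  · have := Finset.mem_Ioc.1 (Finset.mem_sdiff.1 h).1
    rw [Finset.mem_Icc]
    omega

lemma filter_psi_le {m : ℕ} (hm : m ≤ tm n γ) :
    (psi n γ).filter (· ≤ m) = γ.filter (· ≤ m) := by
  unfold psi
  ext x
  simp only [Finset.mem_filter, Finset.mem_union, Finset.mem_sdiff, Finset.mem_Ioc]
  constructor
  · rintro ⟨h | h, hxm⟩
    · exact ⟨h.1, hxm⟩
    · omega
  · rintro ⟨hx, hxm⟩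
    exact ⟨Or.inl ⟨hx, by omega⟩, hxm⟩

lemma cnt_psi_le {m : ℕ} (hm : m ≤ tm n γ) : cnt (psi n γ) m = cnt γ m := by
  unfold cnt
  rw [filter_psi_le hγ hm]

lemma cnt_add_of_ge {m : ℕ} (h1 : tm n γ ≤ m) :
    cnt γ m = cnt γ (tm n γ) + (γ ∩ Finset.Ioc (tm n γ) m).card := by
  unfold cnt
  rw [← Finset.card_union_of_disjoint]
  · congr 1
    ext x
    simp only [Finset.mem_filter, Finset.mem_union, Finset.mem_inter, Finset.mem_Ioc]
    constructor
    · rintro ⟨hx, hxm⟩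
      by_cases hxt : x ≤ tm n γ
      · exact Or.inl ⟨hx, hxt⟩
      · exact Or.inr ⟨hx, by omega, hxm⟩
    · rintro (⟨hx, hxt⟩ | ⟨hx, h2, h3⟩)
      · exact ⟨hx, by omega⟩
      · exact ⟨hx, h3⟩
  · rw [Finset.disjoint_left]
    intro x hx1 hx2
    have := (Finset.mem_filter.1 hx1).2
    have := Finset.mem_Ioc.1 (Finset.mem_inter.1 hx2).2
    omega

lemma cnt_psi_ge {m : ℕ} (h1 : tm n γ ≤ m) (h2 : m ≤ n) :
    cnt (psi n γ) m + cnt γ m = m := by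
  set t := tm n γ with ht
  have hLt : Lv γ t = 0 := Lv_tm hγ
  have h2t : 2 * cnt γ t = t := by
    unfold Lv at hLt; omega
  have hfil : (psi n γ).filter (· ≤ m) =
      γ.filter (· ≤ t) ∪ (Finset.Ioc t m \ γ) := by
    unfold psi
    ext x
    simp only [Finset.mem_filter, Finset.mem_union, Finset.mem_sdiff, Finset.mem_Ioc]
    constructor
    · rintro ⟨h | h, hxm⟩
      · exact Or.inl h
      · exact Or.inr ⟨⟨h.1.1, hxm⟩, h.2⟩
    · rintro (h | h)
      · exact ⟨Or.inl h, by omega⟩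
      · exact ⟨Or.inr ⟨⟨h.1.1, by omega⟩, h.2⟩, h.1.2⟩
  have hdisj : Disjoint (γ.filter (· ≤ t)) (Finset.Ioc t m \ γ) := by
    rw [Finset.disjoint_left]
    intro x hx1 hx2
    have := (Finset.mem_filter.1 hx1).2
    have := Finset.mem_Ioc.1 (Finset.mem_sdiff.1 hx2).1
    omega
  have hcnt : cnt (psi n γ) m = cnt γ t + (Finset.Ioc t m \ γ).card := by
    unfold cnt
    rw [hfil, Finset.card_union_of_disjoint hdisj]
  have hsd : (Finset.Ioc t m \ γ).card + (Finset.Ioc t m ∩ γ).card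
      = (Finset.Ioc t m).card := Finset.card_sdiff_add_card_inter _ _
  have hIoc : (Finset.Ioc t m).card = m - t := Nat.card_Ioc t m
  have hadd := cnt_add_of_ge hγ h1
  rw [← ht] at hadd
  have hint : (γ ∩ Finset.Ioc t m).card = (Finset.Ioc t m ∩ γ).card := by
    rw [Finset.inter_comm]
  omega

lemma Lv_psi_le {m : ℕ} (hm : m ≤ tm n γ) : Lv (psi n γ) m = Lv γ m := by
  unfold Lv
  rw [cnt_psi_le hγ hm]

lemma Lv_psi_ge {m : ℕ} (h1 : tm n γ ≤ m) (h2 : m ≤ n) :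
    Lv (psi n γ) m = - Lv γ m := by
  have := cnt_psi_ge hγ h1 h2
  unfold Lv
  push_cast
  omega

lemma cnt_card {δ : Finset ℕ} (hδ : δ ⊆ Finset.Icc 1 n) : cnt δ n = δ.card := by
  unfold cnt
  rw [Finset.filter_true_of_mem]
  intro x hx
  exact (Finset.mem_Icc.1 (hδ hx)).2

lemma card_psi : (psi n γ).card + γ.card = n := by
  have h := cnt_psi_ge hγ (tm_le hγ) (le_refl n)
  rwa [cnt_card hγ (psi_subset hγ), cnt_card hγ hγ] at h

lemma Zs_psi : Zs n (psi n γ) = Zs n γ := by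
  unfold Zs
  ext m
  simp only [Finset.mem_filter, Finset.mem_range]
  constructor
  · rintro ⟨hm, hz⟩
    refine ⟨hm, ?_⟩
    by_cases hmt : m ≤ tm n γ
    · rwa [Lv_psi_le hγ hmt] at hz
    · rw [Lv_psi_ge hγ (by omega) (by omega)] at hz
      omega
  · rintro ⟨hm, hz⟩
    refine ⟨hm, ?_⟩
    by_cases hmt : m ≤ tm n γ
    · rwa [Lv_psi_le hγ hmt]
    · rw [Lv_psi_ge hγ (by omega) (by omega)]
      omega

lemma tm_psi : tm n (psi n γ) = tm n γ := by
  unfold tm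
  rw [Zs_psi hγ]

lemma psi_psi : psi n (psi n γ) = γ := by
  have ht := tm_psi hγ
  conv_lhs => rw [psi, ht]
  have h1 : (psi n γ).filter (· ≤ tm n γ) = γ.filter (· ≤ tm n γ) :=
    filter_psi_le hγ (le_refl _)
  rw [h1]
  ext x
  simp only [Finset.mem_union, Finset.mem_filter, Finset.mem_sdiff, Finset.mem_Ioc, psi]
  constructor
  · rintro (⟨hx, _⟩ | ⟨⟨h1', h2'⟩, hnp⟩)
    · exact hx
    · simp only [Finset.mem_union, Finset.mem_filter, Finset.mem_sdiff, Finset.mem_Ioc,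
        not_or, not_and, not_not] at hnp
      exact hnp.2 ⟨h1', h2'⟩
  · intro hx
    by_cases hxt : x ≤ tm n γ
    · exact Or.inl ⟨hx, hxt⟩
    · have hxn : x ≤ n := (Finset.mem_Icc.1 (hγ hx)).2
      refine Or.inr ⟨⟨by omega, hxn⟩, ?_⟩
      simp only [Finset.mem_union, Finset.mem_filter, Finset.mem_sdiff, Finset.mem_Ioc,
        not_or, not_and, not_not]
      exact ⟨fun _ => hxt, fun _ => hx⟩

lemma H_psi (hH : ∀ x ∈ γ, Lv γ x ≠ 0) : ∀ x ∈ psi n γ, Lv (psi n γ) x ≠ 0 := by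
  intro x hx
  by_cases hxt : x ≤ tm n γ
  · rw [Lv_psi_le hγ hxt]
    have hxγ : x ∈ γ := by
      rcases Finset.mem_union.1 hx with h | h
      · exact (Finset.mem_filter.1 h).1
      · have := Finset.mem_Ioc.1 (Finset.mem_sdiff.1 h).1
        omega
    exact hH x hxγ
  · have hxn : x ≤ n := (Finset.mem_Icc.1 (psi_subset hγ hx)).2
    rw [Lv_psi_ge hγ (by omega) hxn]
    have := Lv_ne_of_gt hγ (show tm n γ < x by omega) hxn
    omega

end Psi

lemma H_iff (γ : Finset ℕ) : (∀ x ∈ γ, x ≠ 2 * cnt γ x) ↔ (∀ x ∈ γ, Lv γ x ≠ 0) := by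
  apply forall_congr'
  intro x
  apply imp_congr_right
  intro _
  unfold Lv
  omega

end Stmt4Aux

theorem stmt4 (i : ℕ) (hi : 1 ≤ i) :
    T (2 * i) i i = T (2 * i - 1) (i - 1) (i - 1) := by
  classical
  set n := 2 * i - 1 with hn
  have hn1 : n + 1 = 2 * i := by omega
  -- Step 1: shrink the ambient set on the left from Icc 1 (2i) to Icc 1 n
  have hshrink : T (2 * i) i i = ((((Finset.Icc 1 n).powersetCard i)).filter
      fun γ => natCount γ = i).card := by
    unfold T
    congr 1
    ext γ
    simp only [Finset.mem_filter, Finset.mem_powersetCard]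
    constructor
    · rintro ⟨⟨hsub, hcard⟩, hnc⟩
      refine ⟨⟨?_, hcard⟩, hnc⟩
      intro x hx
      have hx2i := Finset.mem_Icc.1 (hsub hx)
      rw [Finset.mem_Icc]
      refine ⟨hx2i.1, ?_⟩
      -- show x ≠ 2i
      have hH : ∀ y ∈ γ, y ≠ 2 * Stmt4Aux.cnt γ y :=
        (Stmt4Aux.natCount_eq_card_iff γ).1 (by rw [hnc, hcard])
      by_contra hgt
      have hx2 : x = 2 * i := by omega
      have hcnt : Stmt4Aux.cnt γ x = i := by
        unfold Stmt4Aux.cnt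
        rw [Finset.filter_true_of_mem, hcard]
        intro y hy
        have := (Finset.mem_Icc.1 (hsub hy)).2
        omega
      exact hH x hx ((by omega : x = 2 * Stmt4Aux.cnt γ x))
    · rintro ⟨⟨hsub, hcard⟩, hnc⟩
      refine ⟨⟨hsub.trans ?_, hcard⟩, hnc⟩
      intro x hx
      rw [Finset.mem_Icc] at hx ⊢
      omega
  rw [hshrink]
  unfold T
  apply Finset.card_bij' (fun γ _ => Stmt4Aux.psi n γ) (fun δ _ => Stmt4Aux.psi n δ)
  · -- forward membership
    intro γ hγm
    rw [Finset.mem_filter, Finset.mem_powersetCard] at hγm ⊢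
    obtain ⟨⟨hsub, hcard⟩, hnc⟩ := hγm
    have hH : ∀ y ∈ γ, Stmt4Aux.Lv γ y ≠ 0 :=
      (Stmt4Aux.H_iff γ).1 ((Stmt4Aux.natCount_eq_card_iff γ).1 (by rw [hnc, hcard]))
    have hpsub := Stmt4Aux.psi_subset hsub
    have hpcard : (Stmt4Aux.psi n γ).card = i - 1 := by
      have := Stmt4Aux.card_psi hsub
      omega
    refine ⟨⟨hpsub, hpcard⟩, ?_⟩
    rw [← hpcard]
    exact (Stmt4Aux.natCount_eq_card_iff _).2
      ((Stmt4Aux.H_iff _).2 (Stmt4Aux.H_psi hsub hH))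
  · -- backward membership
    intro δ hδm
    rw [Finset.mem_filter, Finset.mem_powersetCard] at hδm ⊢
    obtain ⟨⟨hsub, hcard⟩, hnc⟩ := hδm
    have hH : ∀ y ∈ δ, Stmt4Aux.Lv δ y ≠ 0 :=
      (Stmt4Aux.H_iff δ).1 ((Stmt4Aux.natCount_eq_card_iff δ).1 (by rw [hnc, hcard]))
    have hpsub := Stmt4Aux.psi_subset hsub
    have hpcard : (Stmt4Aux.psi n δ).card = i := by
      have := Stmt4Aux.card_psi hsub
      omega
    refine ⟨⟨hpsub, hpcard⟩, ?_⟩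
    rw [← hpcard]
    exact (Stmt4Aux.natCount_eq_card_iff _).2
      ((Stmt4Aux.H_iff _).2 (Stmt4Aux.H_psi hsub hH))
  · intro γ hγm
    rw [Finset.mem_filter, Finset.mem_powersetCard] at hγm
    exact Stmt4Aux.psi_psi hγm.1.1
  · intro δ hδm
    rw [Finset.mem_filter, Finset.mem_powersetCard] at hδm
    exact Stmt4Aux.psi_psi hδm.1.1
end

section
/- For l > 0, the number of l-element subsets γ = {γ₁ < ... < γ_l} of {1,...,2l} with exactly l−1 indices j satisfying γⱼ ≠ 2j equals the number of (l−1)-element subsets δ of {1,...,2l} with exactly l−1 indices j satisfying δⱼ ≠ 2j. That is, T(2l, l, l−1) = T(2l, l−1, l−1). -/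
namespace Stmt8

open Finset

/-- number of elements of `γ` that are `≤ x` -/
def c (γ : Finset ℕ) (x : ℕ) : ℕ := (γ.filter (· ≤ x)).card

def homeSet (γ : Finset ℕ) : Finset ℕ := γ.filter (fun m => m = 2 * c γ m)

lemma c_succ (γ : Finset ℕ) (x : ℕ) :
    c γ (x + 1) = c γ x + (if x + 1 ∈ γ then 1 else 0) := by
  classical
  have hset : γ.filter (· ≤ x + 1) = (γ.filter (· ≤ x)) ∪ (γ.filter (· = x + 1)) := by
    ext y
    simp only [mem_filter, mem_union]
    constructor
    · rintro ⟨hy, hle⟩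
      rcases (by omega : y ≤ x ∨ y = x + 1) with h | h
      · exact Or.inl ⟨hy, h⟩
      · exact Or.inr ⟨hy, h⟩
    · rintro (⟨hy, h⟩ | ⟨hy, h⟩) <;> exact ⟨hy, by omega⟩
  unfold c
  rw [hset, card_union_of_disjoint, filter_eq']
  · by_cases h : x + 1 ∈ γ <;> simp [h]
  · rw [Finset.disjoint_left]
    intro y hy hy2
    simp only [mem_filter] at hy hy2
    omega

lemma c_mono (γ : Finset ℕ) {x y : ℕ} (h : x ≤ y) : c γ x ≤ c γ y := by
  apply card_le_card
  intro t ht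
  simp only [mem_filter] at ht ⊢
  exact ⟨ht.1, ht.2.trans h⟩

lemma c_succ_le (γ : Finset ℕ) (x : ℕ) : c γ (x + 1) ≤ c γ x + 1 := by
  rw [c_succ]; split <;> omega

lemma c_succ_of_mem {γ : Finset ℕ} {x : ℕ} (h : x + 1 ∈ γ) : c γ (x + 1) = c γ x + 1 := by
  rw [c_succ, if_pos h]

lemma c_succ_of_not_mem {γ : Finset ℕ} {x : ℕ} (h : x + 1 ∉ γ) : c γ (x + 1) = c γ x := by
  rw [c_succ, if_neg h]; ring

lemma mem_of_c_succ {γ : Finset ℕ} {x : ℕ} (h : c γ (x + 1) ≠ c γ x) : x + 1 ∈ γ := by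
  by_contra hc; exact h (c_succ_of_not_mem hc)

lemma c_zero {γ : Finset ℕ} (h : 0 ∉ γ) : c γ 0 = 0 := by
  unfold c
  rw [Finset.card_eq_zero, Finset.filter_eq_empty_iff]
  intro y hy h0
  simp only [Nat.le_zero] at h0; subst h0; exact h hy

lemma c_full {γ : Finset ℕ} {n : ℕ} (h : γ ⊆ Finset.Icc 1 n) : c γ n = γ.card := by
  unfold c
  congr 1
  apply Finset.filter_true_of_mem
  intro y hy; exact (Finset.mem_Icc.mp (h hy)).2

lemma c_congr {γ δ : Finset ℕ} {x : ℕ} (h : ∀ t ≤ x, (t ∈ γ ↔ t ∈ δ)) : c γ x = c δ x := by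
  unfold c
  congr 1
  ext t
  simp only [mem_filter]
  constructor
  · rintro ⟨ht, hle⟩; exact ⟨(h t hle).mp ht, hle⟩
  · rintro ⟨ht, hle⟩; exact ⟨(h t hle).mpr ht, hle⟩

lemma c_le_card (γ : Finset ℕ) (x : ℕ) : c γ x ≤ γ.card := card_le_card (filter_subset _ _)

lemma c_eq_succ_of_mem {γ : Finset ℕ} {x : ℕ} (hx : x ∈ γ) :
    c γ x = (γ.filter (· < x)).card + 1 := by
  unfold c
  have : γ.filter (· ≤ x) = insert x (γ.filter (· < x)) := by
    ext y
    simp only [mem_filter, mem_insert]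
    constructor
    · rintro ⟨hy, hle⟩
      rcases eq_or_lt_of_le hle with h | h
      · exact Or.inl h
      · exact Or.inr ⟨hy, h⟩
    · rintro (rfl | ⟨hy, hlt⟩)
      · exact ⟨hx, le_refl _⟩
      · exact ⟨hy, le_of_lt hlt⟩
  rw [this, card_insert_of_notMem (by simp)]

section SortLemmas

variable (γ : Finset ℕ)

lemma card_filter_lt_emb (i : Fin γ.card) :
    (γ.filter (· < γ.orderEmbOfFin rfl i)).card = (i : ℕ) := by
  classical
  have himg : γ.filter (· < γ.orderEmbOfFin rfl i)
      = (Finset.Iio i).image (γ.orderEmbOfFin rfl) := by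
    ext x
    simp only [mem_filter, Finset.mem_image, Finset.mem_Iio]
    constructor
    · rintro ⟨hx, hlt⟩
      have : x ∈ Set.range (γ.orderEmbOfFin rfl) := by
        rw [Finset.range_orderEmbOfFin]; exact hx
      obtain ⟨t, rfl⟩ := this
      exact ⟨t, (γ.orderEmbOfFin rfl).strictMono.lt_iff_lt.mp hlt, rfl⟩
    · rintro ⟨t, hti, rfl⟩
      exact ⟨Finset.orderEmbOfFin_mem _ _ _, (γ.orderEmbOfFin rfl).strictMono hti⟩
  rw [himg, Finset.card_image_of_injective _ (γ.orderEmbOfFin rfl).injective, Fin.card_Iio]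

lemma emb_index {x : ℕ} (hx : x ∈ γ) :
    ∃ h : (γ.filter (· < x)).card < γ.card,
      γ.orderEmbOfFin rfl ⟨(γ.filter (· < x)).card, h⟩ = x := by
  have : x ∈ Set.range (γ.orderEmbOfFin rfl) := by
    rw [Finset.range_orderEmbOfFin]; exact hx
  obtain ⟨t, rfl⟩ := this
  rw [card_filter_lt_emb]
  exact ⟨t.2, by congr⟩

lemma sort_getD (j : ℕ) (hj : j < γ.card) :
    (γ.sort (· ≤ ·)).getD j 0 = γ.orderEmbOfFin rfl ⟨j, hj⟩ := by
  rw [List.getD_eq_getElem _ _ (by rw [Finset.length_sort]; exact hj),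
    Finset.orderEmbOfFin_apply]
  rfl

lemma c_emb (i : Fin γ.card) : c γ (γ.orderEmbOfFin rfl i) = (i : ℕ) + 1 := by
  rw [c_eq_succ_of_mem (Finset.orderEmbOfFin_mem _ _ _), card_filter_lt_emb]

end SortLemmas

lemma natCount_add_homeSet (γ : Finset ℕ) : natCount γ + (homeSet γ).card = γ.card := by
  classical
  have key : ((Finset.range γ.card).filter
      fun j => (γ.sort (· ≤ ·)).getD j 0 = 2 * (j + 1)).card = (homeSet γ).card := by
    apply Finset.card_bij (fun j hj => (γ.sort (· ≤ ·)).getD j 0)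
    · intro j hj
      simp only [mem_filter, Finset.mem_range] at hj
      obtain ⟨hjlt, hjeq⟩ := hj
      rw [sort_getD γ j hjlt] at hjeq ⊢
      simp only [homeSet, mem_filter]
      refine ⟨Finset.orderEmbOfFin_mem _ _ _, ?_⟩
      rw [c_emb]; exact hjeq
    · intro j1 h1 j2 h2 heq
      simp only [mem_filter, Finset.mem_range] at h1 h2
      rw [sort_getD γ j1 h1.1, sort_getD γ j2 h2.1] at heq
      have := (γ.orderEmbOfFin rfl).injective heq
      exact congrArg Fin.val this
    · intro x hx
      simp only [homeSet, mem_filter] at hx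
      obtain ⟨hxγ, hxeq⟩ := hx
      obtain ⟨hlt, hemb⟩ := emb_index γ hxγ
      refine ⟨(γ.filter (· < x)).card, ?_, ?_⟩
      · simp only [mem_filter, Finset.mem_range]
        refine ⟨hlt, ?_⟩
        rw [sort_getD γ _ hlt, hemb]
        rw [c_eq_succ_of_mem hxγ] at hxeq
        exact hxeq
      · rw [sort_getD γ _ hlt, hemb]
  have h2 := Finset.card_filter_add_card_filter_not
    (s := Finset.range γ.card) (p := fun j => (γ.sort (· ≤ ·)).getD j 0 = 2 * (j + 1))
  rw [Finset.card_range] at h2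
  unfold natCount
  simp only [ne_eq]
  omega


open Finset






/-- the complementation-past-`m` operation -/
def flip (n m : ℕ) (s : Finset ℕ) : Finset ℕ :=
  s.filter (· < m) ∪ (Finset.Icc 1 n).filter (fun x => m < x ∧ x ∉ s)

lemma mem_flip {n m x : ℕ} {s : Finset ℕ} :
    x ∈ flip n m s ↔ (x ∈ s ∧ x < m) ∨ (1 ≤ x ∧ x ≤ n ∧ m < x ∧ x ∉ s) := by
  unfold flip
  simp only [mem_union, mem_filter, Finset.mem_Icc]
  tauto

lemma not_mem_flip {n m : ℕ} {s : Finset ℕ} : m ∉ flip n m s := by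
  rw [mem_flip]; omega

lemma flip_subset {n m : ℕ} {s : Finset ℕ} (h : s ⊆ Finset.Icc 1 n) :
    flip n m s ⊆ Finset.Icc 1 n := by
  intro x hx
  rw [mem_flip] at hx
  rcases hx with ⟨h1, _⟩ | ⟨h1, h2, _⟩
  · exact h h1
  · exact Finset.mem_Icc.mpr ⟨h1, h2⟩

lemma flip_flip {n m : ℕ} {s : Finset ℕ} (h : s ⊆ Finset.Icc 1 n) :
    flip n m (flip n m s) = s.erase m := by
  ext x
  simp only [mem_flip, Finset.mem_erase]
  by_cases hs : x ∈ s
  · have hx := Finset.mem_Icc.mp (h hs)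
    simp only [hs, true_and, and_true, not_true, and_false, false_and, false_or, or_false,
      not_false_iff]
    omega
  · simp only [hs, true_and, and_true, not_true, and_false, false_and, false_or, or_false,
      not_false_iff, iff_false, not_or]
    omega

lemma flip_insert {n m : ℕ} {s : Finset ℕ} : flip n m (insert m s) = flip n m s := by
  ext x
  simp only [mem_flip, Finset.mem_insert]
  by_cases hs : x ∈ s <;>
    simp only [hs, true_and, and_true, not_true, and_false, false_and, false_or, or_false,
      or_true, not_false_iff, true_or] <;>
    omega

lemma c_flip_lt {n m x : ℕ} {s : Finset ℕ} (hx : x < m) : c (flip n m s) x = c s x := by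
  apply c_congr
  intro t ht
  rw [mem_flip]
  constructor
  · rintro (⟨h1, _⟩ | ⟨_, _, hmt, _⟩)
    · exact h1
    · omega
  · intro h1
    exact Or.inl ⟨h1, by omega⟩

lemma c_flip_ge {n m : ℕ} {s : Finset ℕ} (hm : 1 ≤ m) :
    ∀ x, m ≤ x → x ≤ n → c (flip n m s) x + c s x + m = c s (m - 1) + c s m + x := by
  obtain ⟨mm, rfl⟩ : ∃ mm, m = mm + 1 := ⟨m - 1, by omega⟩
  simp only [Nat.add_sub_cancel]
  intro x hmx hxn
  induction x, hmx using Nat.le_induction with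
  | base =>
    have h1 : c (flip n (mm + 1) s) (mm + 1) = c (flip n (mm + 1) s) mm :=
      c_succ_of_not_mem not_mem_flip
    have h2 : c (flip n (mm + 1) s) mm = c s mm := c_flip_lt (by omega)
    omega
  | succ x hx ih =>
    have hih := ih (by omega)
    by_cases hxs : x + 1 ∈ s
    · have hnf : x + 1 ∉ flip n (mm + 1) s := by
        rw [mem_flip]; push_neg
        exact ⟨fun _ => by omega, fun _ _ _ => hxs⟩
      rw [c_succ_of_not_mem hnf, c_succ_of_mem hxs]
      omega
    · have hf : x + 1 ∈ flip n (mm + 1) s := by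
        rw [mem_flip]
        exact Or.inr ⟨by omega, by omega, by omega, hxs⟩
      rw [c_succ_of_mem hf, c_succ_of_not_mem hxs]
      omega

/-- after the unique home `m`, the path stays nonnegative -/
lemma no_dip {n m : ℕ} {γ : Finset ℕ} (hend : n ≤ 2 * c γ n)
    (huniq : ∀ y ∈ γ, m < y → y ≠ 2 * c γ y) :
    ∀ x, m ≤ x → x ≤ n → x ≤ 2 * c γ x := by
  intro x hmx hxn
  by_contra hc
  push_neg at hc
  have hSne : ((Finset.Icc x n).filter (fun y => y ≤ 2 * c γ y)).Nonempty :=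
    ⟨n, by simp only [mem_filter, Finset.mem_Icc]; omega⟩
  obtain ⟨y, hyS, hymin⟩ : ∃ y ∈ (Finset.Icc x n).filter (fun y => y ≤ 2 * c γ y),
      ∀ z ∈ (Finset.Icc x n).filter (fun y => y ≤ 2 * c γ y), y ≤ z :=
    ⟨_, Finset.min'_mem _ hSne, fun z hz => Finset.min'_le _ z hz⟩
  simp only [mem_filter, Finset.mem_Icc] at hyS
  obtain ⟨⟨hxy, hyn⟩, hycy⟩ := hyS
  have hyx : x < y := by
    rcases eq_or_lt_of_le hxy with rfl | h
    · omega
    · exact h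
  obtain ⟨z, rfl⟩ : ∃ z, y = z + 1 := ⟨y - 1, by omega⟩
  have hz2 : ¬ (z ≤ 2 * c γ z) := by
    intro hle
    have := hymin z (by simp only [mem_filter, Finset.mem_Icc]; omega)
    omega
  push_neg at hz2
  have hstep := c_succ γ z
  have hmem : z + 1 ∈ γ := by
    by_cases h : z + 1 ∈ γ
    · exact h
    · rw [if_neg h] at hstep; omega
  rw [if_pos hmem] at hstep
  exact huniq (z + 1) hmem (by omega) (by omega)

/-- after `m` (one past the last visit to level -1), the path stays ≤ -2 -/
lemma no_rise {n m : ℕ} {δ : Finset ℕ} (hb : 2 * c δ (m - 1) + 2 = m)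
    (hnh : homeSet δ = ∅)
    (hmax : ∀ t, t ≤ n → t = 2 * c δ t + 1 → t < m) :
    ∀ x, m ≤ x → x ≤ n → 2 * c δ x + 2 ≤ x := by
  obtain ⟨mm, rfl⟩ : ∃ mm, m = mm + 1 := ⟨m - 1, by omega⟩
  simp only [Nat.add_sub_cancel] at hb
  intro x hmx
  induction x, hmx using Nat.le_induction with
  | base =>
    intro _
    have hmem : mm + 1 ∉ δ := by
      intro hmem
      have h1 : c δ (mm + 1) = c δ mm + 1 := c_succ_of_mem hmem
      have hhome : mm + 1 ∈ homeSet δ := by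
        unfold homeSet
        rw [mem_filter]
        exact ⟨hmem, by omega⟩
      rw [hnh] at hhome
      exact absurd hhome (Finset.notMem_empty _)
    have h2 : c δ (mm + 1) = c δ mm := c_succ_of_not_mem hmem
    omega
  | succ x hx ih =>
    intro hxn
    have hih := ih (by omega)
    have h1 : c δ (x + 1) ≤ c δ x + 1 := by rw [c_succ]; split <;> omega
    have h2 : c δ x ≤ c δ (x + 1) := c_mono δ (by omega)
    by_contra hcon
    push_neg at hcon
    have heq : x + 1 = 2 * c δ (x + 1) + 1 := by omega
    have := hmax (x + 1) hxn heq
    omega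

lemma exists_minus_one {n : ℕ} {δ : Finset ℕ} (hend : 2 * c δ n + 2 ≤ n) (h0 : c δ 0 = 0) :
    ∃ t ≤ n, t = 2 * c δ t + 1 := by
  have hSne : ((Finset.range (n + 1)).filter (fun y => 2 * c δ y + 2 ≤ y)).Nonempty :=
    ⟨n, by simp only [mem_filter, Finset.mem_range]; omega⟩
  obtain ⟨y, hyS, hymin⟩ : ∃ y ∈ (Finset.range (n + 1)).filter (fun y => 2 * c δ y + 2 ≤ y),
      ∀ z ∈ (Finset.range (n + 1)).filter (fun y => 2 * c δ y + 2 ≤ y), y ≤ z :=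
    ⟨_, Finset.min'_mem _ hSne, fun z hz => Finset.min'_le _ z hz⟩
  simp only [mem_filter, Finset.mem_range] at hyS
  obtain ⟨hyn, hycy⟩ := hyS
  obtain ⟨z, rfl⟩ : ∃ z, y = z + 1 := ⟨y - 1, by omega⟩
  have hz2 : ¬ (2 * c δ z + 2 ≤ z) := by
    intro hle
    have := hymin z (by simp only [mem_filter, Finset.mem_range]; omega)
    omega
  push_neg at hz2
  have h1 : c δ (z + 1) ≤ c δ z + 1 := by rw [c_succ]; split <;> omega
  have h2 : c δ z ≤ c δ (z + 1) := c_mono δ (by omega)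
  exact ⟨z, by omega, by omega⟩


open Finset





-- new small lemmas
lemma c_insert_ge {m x : ℕ} {s : Finset ℕ} (hm : m ∉ s) (hx : m ≤ x) :
    c (insert m s) x = c s x + 1 := by
  unfold c
  rw [Finset.filter_insert, if_pos hx, Finset.card_insert_of_notMem]
  simp only [mem_filter, not_and]
  intro h
  exact absurd h hm

lemma c_insert_lt {m x : ℕ} {s : Finset ℕ} (hx : x < m) :
    c (insert m s) x = c s x := by
  unfold c
  rw [Finset.filter_insert, if_neg (by omega)]

lemma c_pred_of_mem {δ : Finset ℕ} {x : ℕ} (hx : 1 ≤ x) (h : x ∈ δ) :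
    c δ x = c δ (x - 1) + 1 := by
  obtain ⟨y, rfl⟩ : ∃ y, x = y + 1 := ⟨x - 1, by omega⟩
  simpa using c_succ_of_mem h

lemma c_pred_of_not_mem {δ : Finset ℕ} {x : ℕ} (hx : 1 ≤ x) (h : x ∉ δ) :
    c δ x = c δ (x - 1) := by
  obtain ⟨y, rfl⟩ : ∃ y, x = y + 1 := ⟨x - 1, by omega⟩
  simpa using c_succ_of_not_mem h

def mEl (γ : Finset ℕ) : ℕ :=
  if h : (homeSet γ).Nonempty then (homeSet γ).max' h else 0

lemma mEl_spec {γ : Finset ℕ} {m : ℕ} (h : homeSet γ = {m}) : mEl γ = m := by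
  unfold mEl
  rw [dif_pos (by rw [h]; exact Finset.singleton_nonempty m)]
  simp only [h]
  exact Finset.max'_singleton m

def mRecSet (n : ℕ) (δ : Finset ℕ) : Finset ℕ :=
  (Finset.range (n + 1)).filter (fun t => t = 2 * c δ t + 1)

def mRec (n : ℕ) (δ : Finset ℕ) : ℕ :=
  (if h : (mRecSet n δ).Nonempty then (mRecSet n δ).max' h else 0) + 1

lemma mRec_spec {n t0 : ℕ} {δ : Finset ℕ} (ht0 : t0 ∈ mRecSet n δ)
    (hmax : ∀ t ∈ mRecSet n δ, t ≤ t0) : mRec n δ = t0 + 1 := by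
  unfold mRec
  have hne : (mRecSet n δ).Nonempty := ⟨t0, ht0⟩
  rw [dif_pos hne]
  congr 1
  exact le_antisymm (Finset.max'_le _ hne _ hmax) (Finset.le_max' _ _ ht0)

/-- Everything we need about the forward map. -/
lemma fwd_good {l m : ℕ} {γ : Finset ℕ} (hl : 0 < l)
    (hsub : γ ⊆ Finset.Icc 1 (2 * l)) (hcard : γ.card = l) (hhome : homeSet γ = {m}) :
    flip (2 * l) m γ ⊆ Finset.Icc 1 (2 * l) ∧ (flip (2 * l) m γ).card = l - 1 ∧
      homeSet (flip (2 * l) m γ) = ∅ ∧ mRec (2 * l) (flip (2 * l) m γ) = m ∧ m ∈ γ := by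
  set n := 2 * l with hn
  have hm_home : m ∈ homeSet γ := by rw [hhome]; exact Finset.mem_singleton_self m
  rw [homeSet, mem_filter] at hm_home
  obtain ⟨hm_mem, hm_eq⟩ := hm_home
  have hmIcc := Finset.mem_Icc.mp (hsub hm_mem)
  have hm1 : 1 ≤ m := hmIcc.1
  have hmn : m ≤ n := hmIcc.2
  have hcn : c γ n = l := by rw [c_full hsub, hcard]
  have huniq : ∀ y ∈ γ, m < y → y ≠ 2 * c γ y := by
    intro y hy hmy hcon
    have : y ∈ homeSet γ := by rw [homeSet, mem_filter]; exact ⟨hy, hcon⟩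
    rw [hhome, Finset.mem_singleton] at this
    omega
  have hnodip := no_dip (n := n) (m := m) (γ := γ) (by omega) huniq
  have hcm : c γ m = c γ (m - 1) + 1 := c_pred_of_mem hm1 hm_mem
  have hmaster : ∀ x, m ≤ x → x ≤ n → c (flip n m γ) x + c γ x + 1 = x := by
    intro x h1 h2
    have := c_flip_ge (s := γ) (n := n) hm1 x h1 h2
    omega
  have hsub' : flip n m γ ⊆ Finset.Icc 1 n := flip_subset hsub
  have hcard' : (flip n m γ).card = l - 1 := by
    have h1 := hmaster n hmn (le_refl n)
    rw [c_full hsub'] at h1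
    omega
  have hhome' : homeSet (flip n m γ) = ∅ := by
    rw [Finset.eq_empty_iff_forall_notMem]
    intro x hx
    rw [homeSet, mem_filter] at hx
    obtain ⟨hxf, hxeq⟩ := hx
    rw [mem_flip] at hxf
    rcases hxf with ⟨hxγ, hxm⟩ | ⟨hx1, hxn, hmx, hxγ⟩
    · rw [c_flip_lt hxm] at hxeq
      have : x ∈ homeSet γ := by rw [homeSet, mem_filter]; exact ⟨hxγ, hxeq⟩
      rw [hhome, Finset.mem_singleton] at this
      omega
    · have h1 := hmaster x (by omega) hxn
      have h2 := hnodip x (by omega) hxn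
      omega
  have hrec : mRec n (flip n m γ) = m := by
    have ht0 : m - 1 ∈ mRecSet n (flip n m γ) := by
      rw [mRecSet, mem_filter, Finset.mem_range]
      have : c (flip n m γ) (m - 1) = c γ (m - 1) := c_flip_lt (by omega)
      constructor
      · omega
      · omega
    have hmax : ∀ t ∈ mRecSet n (flip n m γ), t ≤ m - 1 := by
      intro t ht
      rw [mRecSet, mem_filter, Finset.mem_range] at ht
      obtain ⟨htn, hteq⟩ := ht
      by_contra hcon
      have htm : m ≤ t := by omega
      have h1 := hmaster t htm (by omega)
      have h2 := hnodip t htm (by omega)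
      omega
    have := mRec_spec ht0 hmax
    omega
  exact ⟨hsub', hcard', hhome', hrec, hm_mem⟩

/-- Everything we need about the backward map. -/
lemma bwd_good {l : ℕ} {δ : Finset ℕ} (hl : 0 < l)
    (hsub : δ ⊆ Finset.Icc 1 (2 * l)) (hcard : δ.card = l - 1) (hhome : homeSet δ = ∅) :
    insert (mRec (2 * l) δ) (flip (2 * l) (mRec (2 * l) δ) δ) ⊆ Finset.Icc 1 (2 * l) ∧
      (insert (mRec (2 * l) δ) (flip (2 * l) (mRec (2 * l) δ) δ)).card = l ∧
      homeSet (insert (mRec (2 * l) δ) (flip (2 * l) (mRec (2 * l) δ) δ)) = {mRec (2 * l) δ} ∧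
      mRec (2 * l) δ ∉ δ := by
  set n := 2 * l with hn
  have h0mem : 0 ∉ δ := fun h => by have := Finset.mem_Icc.mp (hsub h); omega
  have h0 : c δ 0 = 0 := c_zero h0mem
  have hcn : c δ n = l - 1 := by rw [c_full hsub, hcard]
  have hnh : ∀ x ∈ δ, x ≠ 2 * c δ x := by
    intro x hx hcon
    have : x ∈ homeSet δ := by rw [homeSet, mem_filter]; exact ⟨hx, hcon⟩
    rw [hhome] at this
    exact absurd this (Finset.notMem_empty x)
  obtain ⟨t1, ht1n, ht1eq⟩ := exists_minus_one (n := n) (δ := δ) (by omega) h0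
  have ht1mem : t1 ∈ mRecSet n δ := by
    rw [mRecSet, mem_filter, Finset.mem_range]; exact ⟨by omega, ht1eq⟩
  have hne : (mRecSet n δ).Nonempty := ⟨t1, ht1mem⟩
  set t0 := (mRecSet n δ).max' hne with ht0def
  have ht0mem : t0 ∈ mRecSet n δ := Finset.max'_mem _ hne
  have ht0max : ∀ t ∈ mRecSet n δ, t ≤ t0 := fun t ht => Finset.le_max' _ t ht
  have hrec : mRec n δ = t0 + 1 := mRec_spec ht0mem ht0max
  rw [mRecSet, mem_filter, Finset.mem_range] at ht0mem
  obtain ⟨ht0n, ht0eq⟩ := ht0mem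
  set m := mRec n δ with hmdef
  have hm1 : 1 ≤ m := by omega
  have hmn : m ≤ n := by
    -- if t0 = n then n = 2(l-1)+1, impossible since n = 2l
    rcases Nat.lt_or_ge t0 n with h | h
    · omega
    · exfalso
      have : t0 = n := by omega
      rw [this, hcn] at ht0eq
      omega
  have hb : 2 * c δ (m - 1) + 2 = m := by
    have : m - 1 = t0 := by omega
    rw [this]
    omega
  have hmax : ∀ t, t ≤ n → t = 2 * c δ t + 1 → t < m := by
    intro t htn hteq
    have : t ∈ mRecSet n δ := by
      rw [mRecSet, mem_filter, Finset.mem_range]; exact ⟨by omega, hteq⟩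
    have := ht0max t this
    omega
  have hnorise := no_rise hb hhome hmax
  have hm_not_mem : m ∉ δ := by
    intro hmem
    have h1 : c δ m = c δ (m - 1) + 1 := c_pred_of_mem hm1 hmem
    exact hnh m hmem (by omega)
  have hcmm : c δ m = c δ (m - 1) := c_pred_of_not_mem hm1 hm_not_mem
  set γ' := insert m (flip n m δ) with hγ'
  have hmaster : ∀ x, m ≤ x → x ≤ n → c γ' x + c δ x + 1 = x := by
    intro x h1 h2
    have hfl := c_flip_ge (s := δ) (n := n) hm1 x h1 h2
    have hins : c γ' x = c (flip n m δ) x + 1 :=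
      c_insert_ge not_mem_flip h1
    omega
  have hsub' : γ' ⊆ Finset.Icc 1 n := by
    rw [hγ', Finset.insert_subset_iff]
    exact ⟨Finset.mem_Icc.mpr ⟨hm1, hmn⟩, flip_subset hsub⟩
  have hcard' : γ'.card = l := by
    have h1 := hmaster n hmn (le_refl n)
    rw [c_full hsub'] at h1
    omega
  have hhome' : homeSet γ' = {m} := by
    ext x
    rw [homeSet, mem_filter, Finset.mem_singleton]
    constructor
    · rintro ⟨hxγ, hxeq⟩
      rw [hγ', Finset.mem_insert] at hxγ
      rcases hxγ with rfl | hxf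
      · rfl
      · rw [mem_flip] at hxf
        rcases hxf with ⟨hxδ, hxm⟩ | ⟨hx1, hxn, hmx, hxδ⟩
        · exfalso
          have : c γ' x = c δ x := by
            rw [hγ', c_insert_lt hxm, c_flip_lt hxm]
          rw [this] at hxeq
          exact hnh x hxδ hxeq
        · exfalso
          have h1 := hmaster x (by omega) hxn
          have h2 : c δ x = c δ (x - 1) := c_pred_of_not_mem (by omega) hxδ
          have h3 := hnorise (x - 1) (by omega) (by omega)
          omega
    · rintro rfl
      refine ⟨by rw [hγ']; exact Finset.mem_insert_self _ _, ?_⟩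
      have h1 := hmaster m (le_refl m) hmn
      omega
  exact ⟨hsub', hcard', hhome', hm_not_mem⟩

theorem stmt8' (l : ℕ) (hl : 0 < l) :
    T (2 * l) l (l - 1) = T (2 * l) (l - 1) (l - 1) := by
  unfold T
  have memA : ∀ γ : Finset ℕ,
      (γ ∈ ((Finset.Icc 1 (2 * l)).powersetCard l).filter fun γ => natCount γ = l - 1) ↔
      (γ ⊆ Finset.Icc 1 (2 * l) ∧ γ.card = l ∧ (homeSet γ).card = 1) := by
    intro γ
    rw [mem_filter, Finset.mem_powersetCard]
    have hγ := natCount_add_homeSet γ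
    constructor
    · rintro ⟨⟨h1, h2⟩, h3⟩
      exact ⟨h1, h2, by omega⟩
    · rintro ⟨h1, h2, h3⟩
      exact ⟨⟨h1, h2⟩, by omega⟩
  have memB : ∀ δ : Finset ℕ,
      (δ ∈ ((Finset.Icc 1 (2 * l)).powersetCard (l - 1)).filter fun γ => natCount γ = l - 1) ↔
      (δ ⊆ Finset.Icc 1 (2 * l) ∧ δ.card = l - 1 ∧ homeSet δ = ∅) := by
    intro δ
    rw [mem_filter, Finset.mem_powersetCard]
    have hδ := natCount_add_homeSet δ
    constructor
    · rintro ⟨⟨h1, h2⟩, h3⟩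
      refine ⟨h1, h2, ?_⟩
      rw [← Finset.card_eq_zero]
      omega
    · rintro ⟨h1, h2, h3⟩
      refine ⟨⟨h1, h2⟩, ?_⟩
      rw [h3, Finset.card_empty] at hδ
      omega
  apply Finset.card_nbij' (fun γ => flip (2 * l) (mEl γ) γ)
    (fun δ => insert (mRec (2 * l) δ) (flip (2 * l) (mRec (2 * l) δ) δ))
  · intro γ hγ
    rw [Finset.mem_coe, memA] at hγ
    obtain ⟨h1, h2, h3⟩ := hγ
    obtain ⟨m, hm⟩ := Finset.card_eq_one.mp h3
    beta_reduce
    rw [mEl_spec hm]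
    obtain ⟨g1, g2, g3, _, _⟩ := fwd_good hl h1 h2 hm
    rw [Finset.mem_coe, memB]
    exact ⟨g1, g2, g3⟩
  · intro δ hδ
    rw [Finset.mem_coe, memB] at hδ
    obtain ⟨h1, h2, h3⟩ := hδ
    obtain ⟨g1, g2, g3, _⟩ := bwd_good hl h1 h2 h3
    rw [Finset.mem_coe, memA]
    exact ⟨g1, g2, by rw [g3]; exact Finset.card_singleton _⟩
  · intro γ hγ
    rw [Finset.mem_coe, memA] at hγ
    obtain ⟨h1, h2, h3⟩ := hγ
    obtain ⟨m, hm⟩ := Finset.card_eq_one.mp h3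
    beta_reduce
    rw [mEl_spec hm]
    obtain ⟨g1, g2, g3, g4, g5⟩ := fwd_good hl h1 h2 hm
    rw [g4, flip_flip h1]
    exact Finset.insert_erase g5
  · intro δ hδ
    rw [Finset.mem_coe, memB] at hδ
    obtain ⟨h1, h2, h3⟩ := hδ
    obtain ⟨g1, g2, g3, g4⟩ := bwd_good hl h1 h2 h3
    beta_reduce
    rw [mEl_spec g3, flip_insert, flip_flip h1]
    exact Finset.erase_eq_of_notMem g4

end Stmt8

theorem stmt8 (l : ℕ) (hl : 0 < l) :
    T (2 * l) l (l - 1) = T (2 * l) (l - 1) (l - 1) := by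
  exact Stmt8.stmt8' l hl
end
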